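/- Let f : ℝ → ℝ be Lipschitz continuous with compact support. Then there exist a function H : ℝ → ℝ and a constant C > 0 such that for every u ∈ ℝ the principal value Hilbert transform of f at u exists, i.e. ∫_{{x ∈ ℝ : |u − x| ≥ ε}} f(x)/(u − x) dx converges to H(u) as ε → 0⁺, and moreover |H(u)| ≤ C (1 + u²)^{−1/2} for all u ∈ ℝ. -/

import Mathlib

open MeasureTheory Filter

section Aux

/-- The regularized kernel. -/
noncomputable def gAux (f : ℝ → ℝ) (u x : ℝ) : ℝ :=
  if |u - x| ≤ 1 then (f x - f u) / (u - x) else f x / (u - x)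

lemma annulus_eq (u ε : ℝ) (hε : 0 < ε) :
    {x : ℝ | ε ≤ |u - x| ∧ |u - x| ≤ 1} =
      Set.Icc (u - 1) (u - ε) ∪ Set.Icc (u + ε) (u + 1) := by
  ext x
  simp only [Set.mem_setOf_eq, Set.mem_union, Set.mem_Icc]
  constructor
  · rintro ⟨h1, h2⟩
    rcases le_or_gt x u with hxu | hxu
    · left
      have h : |u - x| = u - x := abs_of_nonneg (by linarith)
      rw [h] at h1 h2
      exact ⟨by linarith, by linarith⟩
    · right
      have h : |u - x| = x - u := by rw [abs_sub_comm]; exact abs_of_nonneg (by linarith)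
      rw [h] at h1 h2
      exact ⟨by linarith, by linarith⟩
  · rintro (⟨h1, h2⟩ | ⟨h1, h2⟩)
    · have h : |u - x| = u - x := abs_of_nonneg (by linarith)
      rw [h]; exact ⟨by linarith, by linarith⟩
    · have h : |u - x| = x - u := by rw [abs_sub_comm]; exact abs_of_nonneg (by linarith)
      rw [h]; exact ⟨by linarith, by linarith⟩

lemma inv_integrableOn_Icc (u a b : ℝ) (h : ∀ x ∈ Set.Icc a b, u - x ≠ 0) :
    IntegrableOn (fun x => (u - x)⁻¹) (Set.Icc a b) :=
  (((continuous_const.sub continuous_id).continuousOn).inv₀ h).integrableOn_compact isCompact_Icc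

lemma inv_integrableOn_annulus (u ε : ℝ) (hε : 0 < ε) (hε1 : ε ≤ 1) :
    IntegrableOn (fun x => (u - x)⁻¹) {x : ℝ | ε ≤ |u - x| ∧ |u - x| ≤ 1} := by
  rw [annulus_eq u ε hε]
  exact (inv_integrableOn_Icc u _ _ (fun x hx => by
      simp only [Set.mem_Icc] at hx; intro hc; nlinarith [hx.1, hx.2])).union
    (inv_integrableOn_Icc u _ _ (fun x hx => by
      simp only [Set.mem_Icc] at hx; intro hc; nlinarith [hx.1, hx.2]))

lemma pv_annulus_zero (u ε : ℝ) (hε : 0 < ε) (hε1 : ε ≤ 1) :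
    ∫ x in {x : ℝ | ε ≤ |u - x| ∧ |u - x| ≤ 1}, (u - x)⁻¹ = 0 := by
  rw [annulus_eq u ε hε]
  have hd : Disjoint (Set.Icc (u - 1) (u - ε)) (Set.Icc (u + ε) (u + 1)) := by
    rw [Set.disjoint_left]
    intro x hx1 hx2
    rw [Set.mem_Icc] at hx1 hx2
    linarith [hx1.2, hx2.1, hε]
  rw [setIntegral_union hd measurableSet_Icc
    (inv_integrableOn_Icc u _ _ (fun x hx => by
      simp only [Set.mem_Icc] at hx; intro hc; nlinarith [hx.1, hx.2]))
    (inv_integrableOn_Icc u _ _ (fun x hx => by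
      simp only [Set.mem_Icc] at hx; intro hc; nlinarith [hx.1, hx.2]))]
  have e1 : ∫ x in Set.Icc (u - 1) (u - ε), (u - x)⁻¹ = ∫ x in (u - 1)..(u - ε), (u - x)⁻¹ := by
    rw [intervalIntegral.integral_of_le (by linarith), MeasureTheory.integral_Icc_eq_integral_Ioc]
  have e2 : ∫ x in Set.Icc (u + ε) (u + 1), (u - x)⁻¹ = ∫ x in (u + ε)..(u + 1), (u - x)⁻¹ := by
    rw [intervalIntegral.integral_of_le (by linarith), MeasureTheory.integral_Icc_eq_integral_Ioc]
  rw [e1, e2]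
  rw [intervalIntegral.integral_comp_sub_left (fun t => t⁻¹) u,
      intervalIntegral.integral_comp_sub_left (fun t => t⁻¹) u]
  have h1 : u - (u - ε) = ε := by ring
  have h2 : u - (u - 1) = 1 := by ring
  have h3 : u - (u + 1) = -1 := by ring
  have h4 : u - (u + ε) = -ε := by ring
  rw [h1, h2, h3, h4]
  rw [integral_inv (by
        refine Set.notMem_uIcc_of_lt hε one_pos),
      integral_inv (by
        refine Set.notMem_uIcc_of_gt (by linarith) (by linarith))]
  have : (-ε) / (-1 : ℝ) = ε := by field_simp
  rw [this, one_div, Real.log_inv]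
  ring

end Aux

section GAux

lemma indicator_const_integrable (c R' x0 : ℝ) :
    Integrable ((Metric.closedBall x0 R').indicator (fun _ => c)) := by
  rw [integrable_indicator_iff measurableSet_closedBall]
  refine integrableOn_const (ne_of_lt ?_)
  rw [Real.volume_closedBall]
  exact ENNReal.ofReal_lt_top

lemma gAux_meas (f : ℝ → ℝ) (hfc : Continuous f) (u : ℝ) : Measurable (gAux f u) := by
  unfold gAux
  refine Measurable.ite ?_ ?_ ?_
  · exact measurableSet_le ((continuous_const.sub continuous_id).abs.measurable) measurable_const
  · exact (hfc.measurable.sub measurable_const).div (measurable_const.sub measurable_id)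
  · exact hfc.measurable.div (measurable_const.sub measurable_id)

lemma gAux_abs_le_of_close (f : ℝ → ℝ) (K : NNReal) (hf : LipschitzWith K f) (u x : ℝ)
    (hx : |u - x| ≤ 1) : |gAux f u x| ≤ (K : ℝ) := by
  unfold gAux
  rw [if_pos hx]
  rcases eq_or_ne (u - x) 0 with h | h
  · simp [h]
  · rw [abs_div, div_le_iff₀ (abs_pos.2 h)]
    have := hf.dist_le_mul x u
    rw [Real.dist_eq, Real.dist_eq] at this
    calc |f x - f u| ≤ (K : ℝ) * |x - u| := this
    _ = (K : ℝ) * |u - x| := by rw [abs_sub_comm]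

lemma gAux_integrable (f : ℝ → ℝ) (K : NNReal) (hf : LipschitzWith K f)
    (hsupp : HasCompactSupport f) (u : ℝ) : Integrable (gAux f u) := by
  have hfc : Continuous f := hf.continuous
  refine Integrable.mono' (g := fun x =>
      (Metric.closedBall u 1).indicator (fun _ => (K : ℝ)) x + |f x|) ?_
    (gAux_meas f hfc u).aestronglyMeasurable (ae_of_all _ fun x => ?_)
  · exact (indicator_const_integrable _ _ _).add
      (hfc.integrable_of_hasCompactSupport hsupp).abs
  · rw [Real.norm_eq_abs]
    by_cases hx : |u - x| ≤ 1
    · have hmem : x ∈ Metric.closedBall u 1 := by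
        rw [Metric.mem_closedBall, Real.dist_eq, abs_sub_comm]; exact hx
      rw [Set.indicator_of_mem hmem]
      have := gAux_abs_le_of_close f K hf u x hx
      have := abs_nonneg (f x)
      linarith
    · have hmem : x ∉ Metric.closedBall u 1 := by
        rw [Metric.mem_closedBall, Real.dist_eq, abs_sub_comm]; exact hx
      rw [Set.indicator_of_notMem hmem, zero_add]
      unfold gAux
      rw [if_neg hx, abs_div]
      exact div_le_self (abs_nonneg _) (le_of_lt (not_le.1 hx))

lemma gAux_norm_integral_le (f : ℝ → ℝ) (K : NNReal) (M R : ℝ) (hf : LipschitzWith K f)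
    (hsupp : HasCompactSupport f) (hM : ∀ x, |f x| ≤ M) (hM0 : 0 ≤ M) (hRpos : 0 < R)
    (hsub : ∀ x, f x ≠ 0 → x ∈ Metric.closedBall 0 R) (u : ℝ) :
    |∫ x, gAux f u x| ≤ 2 * (K : ℝ) + 2 * R * M := by
  have hfc : Continuous f := hf.continuous
  have hb : ∀ x, |gAux f u x| ≤ (Metric.closedBall u 1).indicator (fun _ => (K : ℝ)) x
      + (Metric.closedBall 0 R).indicator (fun _ => M) x := by
    intro x
    by_cases hx : |u - x| ≤ 1
    · have hmem : x ∈ Metric.closedBall u 1 := by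
        rw [Metric.mem_closedBall, Real.dist_eq, abs_sub_comm]; exact hx
      rw [Set.indicator_of_mem hmem]
      have h1 := gAux_abs_le_of_close f K hf u x hx
      have h2 : 0 ≤ (Metric.closedBall 0 R).indicator (fun _ => M) x :=
        Set.indicator_nonneg (fun _ _ => hM0) x
      linarith
    · have hmem : x ∉ Metric.closedBall u 1 := by
        rw [Metric.mem_closedBall, Real.dist_eq, abs_sub_comm]; exact hx
      rw [Set.indicator_of_notMem hmem, zero_add]
      have hle : |gAux f u x| ≤ |f x| := by
        unfold gAux
        rw [if_neg hx, abs_div]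
        exact div_le_self (abs_nonneg _) (le_of_lt (not_le.1 hx))
      by_cases hfx : f x = 0
      · simp only [gAux, hfx] at hle ⊢
        refine le_trans hle ?_
        simp only [abs_zero]
        exact Set.indicator_nonneg (fun _ _ => hM0) x
      · rw [Set.indicator_of_mem (hsub x hfx)]
        exact hle.trans (hM x)
  have hint1 : Integrable ((Metric.closedBall u 1).indicator (fun _ => (K : ℝ))) :=
    indicator_const_integrable _ _ _
  have hint2 : Integrable ((Metric.closedBall (0:ℝ) R).indicator (fun _ => M)) :=
    indicator_const_integrable _ _ _
  calc |∫ x, gAux f u x| ≤ ∫ x, |gAux f u x| := by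
        rw [← Real.norm_eq_abs (∫ x, gAux f u x)]
        exact (norm_integral_le_integral_norm _).trans (le_of_eq (by simp [Real.norm_eq_abs]))
  _ ≤ ∫ x, ((Metric.closedBall u 1).indicator (fun _ => (K : ℝ)) x
      + (Metric.closedBall 0 R).indicator (fun _ => M) x) :=
        integral_mono (gAux_integrable f K hf hsupp u).abs (hint1.add hint2) hb
  _ = 2 * (K : ℝ) + 2 * R * M := by
        rw [integral_add hint1 hint2, integral_indicator_const _ measurableSet_closedBall,
          integral_indicator_const _ measurableSet_closedBall,
          measureReal_def, measureReal_def, Real.volume_closedBall, Real.volume_closedBall,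
          ENNReal.toReal_ofReal (by norm_num), ENNReal.toReal_ofReal (by linarith)]
        simp only [smul_eq_mul]
        ring

end GAux

section Main

lemma gAux_far_bound (f : ℝ → ℝ) (K : NNReal) (M R : ℝ) (hf : LipschitzWith K f)
    (hM : ∀ x, |f x| ≤ M) (hM0 : 0 ≤ M) (hRpos : 0 < R)
    (hfR : ∀ x, R < |x| → f x = 0) (u : ℝ) (hu : R + 2 ≤ |u|) :
    |∫ x, gAux f u x| ≤ 2 * R * M / (|u| - R) := by
  have hfu : f u = 0 := hfR u (by linarith)
  have heq : ∀ x, gAux f u x = f x / (u - x) := by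
    intro x
    unfold gAux
    by_cases hx : |u - x| ≤ 1
    · have hxR : R < |x| := by
        have h1 : |u| ≤ |u - x| + |x| := by
          calc |u| = |(u - x) + x| := by ring_nf
          _ ≤ |u - x| + |x| := abs_add_le _ _
        linarith
      rw [if_pos hx, hfR x hxR, hfu]
      simp
    · rw [if_neg hx]
  simp only [heq]
  have hset : ∫ x, f x / (u - x) = ∫ x in Metric.closedBall (0:ℝ) R, f x / (u - x) := by
    refine (setIntegral_eq_integral_of_forall_compl_eq_zero (fun x hx => ?_)).symm
    have hxR : R < |x| := by
      simp only [Metric.mem_closedBall, Real.dist_eq, sub_zero, not_le] at hx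
      exact hx
    rw [hfR x hxR, zero_div]
  rw [hset]
  have hb : ∀ x ∈ Metric.closedBall (0:ℝ) R, ‖f x / (u - x)‖ ≤ M / (|u| - R) := by
    intro x hx
    rw [Metric.mem_closedBall, Real.dist_eq, sub_zero] at hx
    rw [Real.norm_eq_abs, abs_div]
    have h2 : |u| - R ≤ |u - x| := by
      have := abs_sub_abs_le_abs_sub u x
      linarith
    exact div_le_div₀ hM0 (hM x) (by linarith) h2
  have hfin : volume (Metric.closedBall (0:ℝ) R) < ⊤ := by
    rw [Real.volume_closedBall]; exact ENNReal.ofReal_lt_top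
  have hkey := norm_setIntegral_le_of_norm_le_const hfin hb
  rw [measureReal_def, Real.volume_closedBall, ENNReal.toReal_ofReal (by linarith), Real.norm_eq_abs] at hkey
  calc |∫ x in Metric.closedBall (0:ℝ) R, f x / (u - x)| ≤ M / (|u| - R) * (2 * R) := hkey
  _ = 2 * R * M / (|u| - R) := by ring

lemma split_integral (f : ℝ → ℝ) (K : NNReal) (hf : LipschitzWith K f)
    (hsupp : HasCompactSupport f) (u ε : ℝ) (hε : 0 < ε) (hε1 : ε ≤ 1) :
    ∫ x in {x : ℝ | ε ≤ |u - x|}, f x / (u - x) = ∫ x in {x : ℝ | ε ≤ |u - x|}, gAux f u x := by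
  have hAmeas : MeasurableSet {x : ℝ | ε ≤ |u - x|} :=
    measurableSet_le measurable_const ((continuous_const.sub continuous_id).abs.measurable)
  have hSeq : {x : ℝ | ε ≤ |u - x|} ∩ Metric.closedBall u 1
      = {x : ℝ | ε ≤ |u - x| ∧ |u - x| ≤ 1} := by
    ext x
    simp only [Set.mem_inter_iff, Set.mem_setOf_eq, Metric.mem_closedBall, Real.dist_eq,
      abs_sub_comm x u]
  have hind : IntegrableOn ((Metric.closedBall u 1).indicator
      (fun y => f u * (u - y)⁻¹)) {x : ℝ | ε ≤ |u - x|} := by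
    rw [IntegrableOn, integrable_indicator_iff measurableSet_closedBall, IntegrableOn,
      Measure.restrict_restrict measurableSet_closedBall, Set.inter_comm, hSeq]
    exact (inv_integrableOn_annulus u ε hε hε1).const_mul (f u)
  have hptwise : ∀ x ∈ {x : ℝ | ε ≤ |u - x|}, f x / (u - x)
      = gAux f u x + (Metric.closedBall u 1).indicator (fun y => f u * (u - y)⁻¹) x := by
    intro x hx
    rw [Set.mem_setOf_eq] at hx
    have hne : u - x ≠ 0 := by
      intro hc
      rw [hc, abs_zero] at hx
      linarith
    by_cases h1 : |u - x| ≤ 1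
    · have hmem : x ∈ Metric.closedBall u 1 := by
        rw [Metric.mem_closedBall, Real.dist_eq, abs_sub_comm]; exact h1
      rw [Set.indicator_of_mem hmem]
      unfold gAux
      rw [if_pos h1]
      field_simp
      ring
    · have hmem : x ∉ Metric.closedBall u 1 := by
        rw [Metric.mem_closedBall, Real.dist_eq, abs_sub_comm]; exact h1
      rw [Set.indicator_of_notMem hmem, add_zero]
      unfold gAux
      rw [if_neg h1]
  rw [setIntegral_congr_fun hAmeas hptwise,
    integral_add ((gAux_integrable f K hf hsupp u).integrableOn) hind]
  have hzero : ∫ x in {x : ℝ | ε ≤ |u - x|},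
      (Metric.closedBall u 1).indicator (fun y => f u * (u - y)⁻¹) x = 0 := by
    rw [setIntegral_indicator measurableSet_closedBall, hSeq, integral_const_mul,
      pv_annulus_zero u ε hε hε1, mul_zero]
  rw [hzero, add_zero]

lemma tail_bound (f : ℝ → ℝ) (K : NNReal) (hf : LipschitzWith K f)
    (hsupp : HasCompactSupport f) (u ε : ℝ) (hε : 0 < ε) (hε1 : ε ≤ 1) :
    |(∫ x in {x : ℝ | ε ≤ |u - x|}, gAux f u x) - ∫ x, gAux f u x| ≤ 2 * (K : ℝ) * ε := by
  have hAmeas : MeasurableSet {x : ℝ | ε ≤ |u - x|} :=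
    measurableSet_le measurable_const ((continuous_const.sub continuous_id).abs.measurable)
  have hcompl : {x : ℝ | ε ≤ |u - x|}ᶜ = Metric.ball u ε := by
    ext x
    simp only [Set.mem_compl_iff, Set.mem_setOf_eq, not_le, Metric.mem_ball, Real.dist_eq,
      abs_sub_comm x u]
  have hsplit := integral_add_compl hAmeas (gAux_integrable f K hf hsupp u)
  have heq : (∫ x in {x : ℝ | ε ≤ |u - x|}, gAux f u x) - ∫ x, gAux f u x
      = -(∫ x in Metric.ball u ε, gAux f u x) := by
    rw [← hcompl]
    linarith [hsplit]
  rw [heq, abs_neg]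
  have hb : ∀ x ∈ Metric.ball u ε, ‖gAux f u x‖ ≤ (K : ℝ) := by
    intro x hx
    rw [Metric.mem_ball, Real.dist_eq] at hx
    rw [Real.norm_eq_abs]
    exact gAux_abs_le_of_close f K hf u x (by rw [abs_sub_comm]; linarith)
  have hfin : volume (Metric.ball u ε) < ⊤ := by
    rw [Real.volume_ball]; exact ENNReal.ofReal_lt_top
  have hkey := norm_setIntegral_le_of_norm_le_const hfin hb
  rw [measureReal_def, Real.volume_ball, ENNReal.toReal_ofReal (by linarith), Real.norm_eq_abs] at hkey
  calc |∫ x in Metric.ball u ε, gAux f u x| ≤ (K : ℝ) * (2 * ε) := hkey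
  _ = 2 * (K : ℝ) * ε := by ring

end Main

/-- For a Lipschitz function `f` with compact support, the principal value Hilbert transform
`H(u) = lim_{ε→0⁺} ∫_{|u−x| ≥ ε} f(x)/(u−x) dx` exists at every point and satisfies
`|H(u)| ≤ C (1 + u²)^{−1/2}`. -/
theorem hilbert_transform_exists_and_decays
    (f : ℝ → ℝ) (K : NNReal) (hf : LipschitzWith K f) (hsupp : HasCompactSupport f) :
    ∃ (H : ℝ → ℝ) (C : ℝ), 0 < C ∧ ∀ u : ℝ,
      Tendsto (fun ε : ℝ => ∫ x in {x : ℝ | ε ≤ |u - x|}, f x / (u - x))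
        (nhdsWithin 0 (Set.Ioi 0)) (nhds (H u)) ∧
      |H u| ≤ C * (1 + u ^ 2) ^ (-(1:ℝ)/2) := by
  obtain ⟨M, hM⟩ := hsupp.exists_bound_of_continuous hf.continuous
  simp only [Real.norm_eq_abs] at hM
  have hM0 : 0 ≤ M := le_trans (abs_nonneg _) (hM 0)
  obtain ⟨R₀, hR₀⟩ := hsupp.isBounded.subset_closedBall 0
  set R : ℝ := max R₀ 1 with hRdef
  have hR1 : (1 : ℝ) ≤ R := le_max_right _ _
  have hRpos : (0 : ℝ) < R := by linarith
  have hR : tsupport f ⊆ Metric.closedBall 0 R :=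
    hR₀.trans (Metric.closedBall_subset_closedBall (le_max_left _ _))
  have hsub : ∀ x, f x ≠ 0 → x ∈ Metric.closedBall (0:ℝ) R :=
    fun x hx => hR (subset_tsupport f hx)
  have hfR : ∀ x, R < |x| → f x = 0 := by
    intro x hx
    by_contra hc
    have := hsub x hc
    rw [Metric.mem_closedBall, Real.dist_eq, sub_zero] at this
    linarith
  set C : ℝ := (2 * (K : ℝ) + 2 * R * M + 2 * R * M * (R + 2) + 1)
      * Real.sqrt (1 + (R + 2) ^ 2) with hCdef
  have hsqrt1 : (1 : ℝ) ≤ Real.sqrt (1 + (R + 2) ^ 2) := by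
    have h := Real.sqrt_le_sqrt (show (1:ℝ) ≤ 1 + (R + 2) ^ 2 by nlinarith)
    rwa [Real.sqrt_one] at h
  have hCpos : 0 < C := by
    have h1 : (0:ℝ) < 2 * (K : ℝ) + 2 * R * M + 2 * R * M * (R + 2) + 1 := by positivity
    calc (0:ℝ) < 1 * 1 := by norm_num
    _ ≤ (2 * (K : ℝ) + 2 * R * M + 2 * R * M * (R + 2) + 1) * Real.sqrt (1 + (R + 2) ^ 2) := by
        apply mul_le_mul ?_ hsqrt1 zero_le_one (le_of_lt h1)
        nlinarith [NNReal.coe_nonneg K, mul_nonneg hRpos.le hM0,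
          mul_nonneg (mul_nonneg hRpos.le hM0) (show (0:ℝ) ≤ R + 2 by linarith)]
  refine ⟨fun u => ∫ x, gAux f u x, C, hCpos, fun u => ⟨?_, ?_⟩⟩
  · -- the limit
    have hev : Set.Ioc (0:ℝ) 1 ∈ nhdsWithin (0:ℝ) (Set.Ioi 0) :=
      Ioc_mem_nhdsGT one_pos
    have hlim : Tendsto (fun ε : ℝ => 2 * (K : ℝ) * ε) (nhdsWithin 0 (Set.Ioi 0)) (nhds 0) := by
      have : Tendsto (fun ε : ℝ => 2 * (K : ℝ) * ε) (nhds 0) (nhds (2 * (K : ℝ) * 0)) :=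
        (continuous_const.mul continuous_id).tendsto 0
      rw [mul_zero] at this
      exact this.mono_left nhdsWithin_le_nhds
    have h2 : Tendsto (fun ε : ℝ => ∫ x in {x : ℝ | ε ≤ |u - x|}, gAux f u x)
        (nhdsWithin 0 (Set.Ioi 0)) (nhds (∫ x, gAux f u x)) := by
      have key : Tendsto (fun ε : ℝ =>
          (∫ x in {x : ℝ | ε ≤ |u - x|}, gAux f u x) - ∫ x, gAux f u x)
          (nhdsWithin 0 (Set.Ioi 0)) (nhds 0) := by
        apply squeeze_zero_norm' _ hlim
        filter_upwards [hev] with ε hε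
        rw [Real.norm_eq_abs]
        exact tail_bound f K hf hsupp u ε hε.1 hε.2
      have := key.add_const (∫ x, gAux f u x)
      rw [zero_add] at this
      convert this using 2 with ε
      ring
    refine h2.congr' ?_
    filter_upwards [hev] with ε hε
    exact (split_integral f K hf hsupp u ε hε.1 hε.2).symm
  · -- the decay
    have hsq : ((1 : ℝ) + u ^ 2) ^ (-(1:ℝ)/2) = (Real.sqrt (1 + u ^ 2))⁻¹ := by
      rw [Real.sqrt_eq_rpow, ← Real.rpow_neg (by positivity)]
      norm_num
    have hspos : 0 < Real.sqrt (1 + u ^ 2) := Real.sqrt_pos.2 (by positivity)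
    rw [hsq, ← div_eq_mul_inv, le_div_iff₀ hspos]
    rcases le_or_gt (|u|) (R + 2) with hu | hu
    · -- near regime
      have h1 : |∫ x, gAux f u x| ≤ 2 * (K : ℝ) + 2 * R * M :=
        gAux_norm_integral_le f K M R hf hsupp hM hM0 hRpos hsub u
      have h2 : Real.sqrt (1 + u ^ 2) ≤ Real.sqrt (1 + (R + 2) ^ 2) := by
        apply Real.sqrt_le_sqrt
        have := abs_le.1 hu
        nlinarith [sq_le_sq' (by linarith [this.1] : -(R+2) ≤ u) this.2]
      calc |∫ x, gAux f u x| * Real.sqrt (1 + u ^ 2)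
          ≤ (2 * (K : ℝ) + 2 * R * M) * Real.sqrt (1 + (R + 2) ^ 2) :=
            mul_le_mul h1 h2 (Real.sqrt_nonneg _) (by positivity)
      _ ≤ C := by
            rw [hCdef]
            have h3 : (0:ℝ) ≤ Real.sqrt (1 + (R + 2) ^ 2) := Real.sqrt_nonneg _
            have h4 : (0:ℝ) ≤ 2 * R * M * (R + 2) := by positivity
            nlinarith
    · -- far regime
      have hu' : R + 2 ≤ |u| := le_of_lt hu
      have h1 : |∫ x, gAux f u x| ≤ 2 * R * M / (|u| - R) :=
        gAux_far_bound f K M R hf hM hM0 hRpos hfR u hu'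
      have huR : (2:ℝ) ≤ |u| - R := by linarith
      have h2 : Real.sqrt (1 + u ^ 2) ≤ 2 * |u| := by
        rw [show 2 * |u| = Real.sqrt ((2 * |u|) ^ 2) from
          (Real.sqrt_sq (by positivity)).symm]
        apply Real.sqrt_le_sqrt
        have h3 : (3:ℝ) ≤ |u| := by linarith
        have h4 : u ^ 2 = |u| ^ 2 := (sq_abs u).symm
        nlinarith
      calc |∫ x, gAux f u x| * Real.sqrt (1 + u ^ 2)
          ≤ (2 * R * M / (|u| - R)) * (2 * |u|) := by
            apply mul_le_mul h1 h2 (Real.sqrt_nonneg _) (by positivity)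
      _ ≤ 2 * R * M * (R + 2) := by
            rw [div_mul_eq_mul_div, div_le_iff₀ (by linarith : (0:ℝ) < |u| - R)]
            have h5 : 0 ≤ R * M * (|u| - (R + 2)) :=
              mul_nonneg (mul_nonneg hRpos.le hM0) (by linarith)
            nlinarith [mul_nonneg hRpos.le h5]
      _ ≤ C := by
            rw [hCdef]
            have h3 : (0:ℝ) ≤ 2 * R * M * (R + 2) := by positivity
            nlinarith [Real.sqrt_nonneg (1 + (R + 2) ^ 2), NNReal.coe_nonneg K,
              mul_nonneg hRpos.le hM0]
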